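/- arXiv:1310.1423 — 3 statements merged into one kernel-verified Lean document; each statement's English description precedes it below -/
import Mathlib

section
/- For every dimension d ≥ 1, the integral over the cube [-1,1]^{d-1} of 1/(1 + x_1^2 + ... + x_{d-1}^2)^{d/2} with respect to dx_1...dx_{d-1} equals (1/d) · π^{d/2} / Γ(d/2). -/
open MeasureTheory

open Set ENNReal in

noncomputable section
namespace SolidAngle

variable (n : ℕ)

def cube : Set (Fin n → ℝ) := Set.pi Set.univ fun _ => Set.Icc (-1:ℝ) 1

def Mset (i : Fin (n+1)) (b : Bool) : Set (Fin (n+1) → ℝ) :=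
  {y | (∀ j, |y j| ≤ (if b then y i else -(y i))) ∧ ∑ j, (y j)^2 ≤ 1}

def Kset : Set (ℝ × (Fin n → ℝ)) :=
  {p | 0 < p.1 ∧ (∀ i, |p.2 i| ≤ p.1) ∧ p.1^2 + ∑ i, (p.2 i)^2 ≤ 1}

lemma measurableSet_Mset (i : Fin (n+1)) (b : Bool) : MeasurableSet (Mset n i b) := by
  have h : Mset n i b
      = (⋂ j, {y : Fin (n+1) → ℝ | |y j| ≤ (if b then y i else -(y i))})
        ∩ {y | ∑ j, (y j)^2 ≤ 1} := by
    ext y; simp [Mset]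
  rw [h]
  refine MeasurableSet.inter (MeasurableSet.iInter fun j => ?_) ?_
  · exact measurableSet_le ((measurable_pi_apply j).abs)
      (by cases b <;> simp <;> fun_prop)
  · exact measurableSet_le (by fun_prop) measurable_const

lemma measurableSet_Kset : MeasurableSet (Kset n) := by
  have h : Kset n
      = {p : ℝ × (Fin n → ℝ) | 0 < p.1}
        ∩ ((⋂ i, {p : ℝ × (Fin n → ℝ) | |p.2 i| ≤ p.1})
        ∩ {p : ℝ × (Fin n → ℝ) | p.1^2 + ∑ i, (p.2 i)^2 ≤ 1}) := by
    ext p; simp [Kset, and_assoc]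
  rw [h]
  refine (measurableSet_lt measurable_const measurable_fst).inter
    ((MeasurableSet.iInter fun i => measurableSet_le (by fun_prop) measurable_fst).inter
      (measurableSet_le (by fun_prop) measurable_const))

end SolidAngle

namespace SolidAngle
open Real

/-- A coordinate hyperplane-type set is null. -/
lemma null_eq_coord {m : ℕ} (i j : Fin m) (c : ℝ) (hij : i ≠ j) :
    volume {y : Fin m → ℝ | y i = c * y j} = 0 := by
  set L : (Fin m → ℝ) →ₗ[ℝ] ℝ :=
    (LinearMap.proj i : (Fin m → ℝ) →ₗ[ℝ] ℝ) - c • (LinearMap.proj j) with hL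
  have hker : {y : Fin m → ℝ | y i = c * y j} = (LinearMap.ker L : Set (Fin m → ℝ)) := by
    ext y
    simp [hL, sub_eq_zero, LinearMap.mem_ker]
  rw [hker]
  refine Measure.addHaar_submodule _ _ ?_
  intro htop
  have h1 : Pi.single i 1 ∈ LinearMap.ker L := htop ▸ Submodule.mem_top
  have := LinearMap.mem_ker.mp h1
  simp [hL, Pi.single_apply, hij.symm] at this

lemma null_zero_coord {m : ℕ} (i : Fin m) : volume {y : Fin m → ℝ | y i = 0} = 0 := by
  set L : (Fin m → ℝ) →ₗ[ℝ] ℝ := (LinearMap.proj i : (Fin m → ℝ) →ₗ[ℝ] ℝ) with hL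
  have hker : {y : Fin m → ℝ | y i = 0} = (LinearMap.ker L : Set (Fin m → ℝ)) := by
    ext y; simp [hL, LinearMap.mem_ker]
  rw [hker]
  refine Measure.addHaar_submodule _ _ ?_
  intro htop
  have h1 : Pi.single i 1 ∈ LinearMap.ker L := htop ▸ Submodule.mem_top
  have := LinearMap.mem_ker.mp h1
  simp [hL, Pi.single_apply] at this

end SolidAngle

namespace SolidAngle
open Real

lemma mp_signperm (n : ℕ) (σ : Equiv.Perm (Fin (n+1))) (ε : Fin (n+1) → ℝ)
    (hε : ∀ j, ε j = 1 ∨ ε j = -1) :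
    MeasurePreserving (fun (y : Fin (n+1) → ℝ) j => ε j * y (σ j)) volume volume := by
  have h1 : MeasurePreserving (fun (y : Fin (n+1) → ℝ) => y ∘ σ) volume volume := by
    have key : ⇑(MeasurableEquiv.piCongrLeft (fun _ : Fin (n+1) => ℝ) σ.symm)
        = fun (y : Fin (n+1) → ℝ) => y ∘ σ := by
      funext y j
      rw [MeasurableEquiv.coe_piCongrLeft]
      simp [Equiv.piCongrLeft_apply, eq_rec_constant]
    have := volume_measurePreserving_piCongrLeft (fun _ : Fin (n+1) => ℝ) σ.symm
    rwa [key] at this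
  have h2 : MeasurePreserving (fun (z : Fin (n+1) → ℝ) j => ε j * z j) volume volume := by
    apply volume_preserving_pi
    intro j
    rcases hε j with h | h
    · show MeasurePreserving (fun t : ℝ => ε j * t) volume volume
      simp only [h, one_mul]
      exact MeasurePreserving.id _
    · show MeasurePreserving (fun t : ℝ => ε j * t) volume volume
      simp only [h, neg_one_mul]
      exact Measure.measurePreserving_neg _
  exact h2.comp h1

lemma volume_Mset (n : ℕ) (i : Fin (n+1)) (b : Bool) :
    volume (Mset n i b) = volume (Mset n 0 true) := by
  classical
  set σ := Equiv.swap (0 : Fin (n+1)) i with hσ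
  set ε : Fin (n+1) → ℝ := fun j => if j = 0 ∧ b = false then -1 else 1 with hε
  have hεpm : ∀ j, ε j = 1 ∨ ε j = -1 := by
    intro j; by_cases h : j = 0 ∧ b = false <;> simp [hε, h]
  have hT := mp_signperm n σ ε hεpm
  have habs1 : ∀ j, |ε j| = 1 := by
    intro j; rcases hεpm j with h | h <;> simp [h]
  have hsq : ∀ j, (ε j)^2 = 1 := by
    intro j; rcases hεpm j with h | h <;> simp [h]
  have hpre : (fun (y : Fin (n+1) → ℝ) j => ε j * y (σ j)) ⁻¹' (Mset n 0 true) = Mset n i b := by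
    ext y
    simp only [Set.mem_preimage, Mset, Set.mem_setOf_eq, if_true]
    have e0 : ε 0 * y (σ 0) = (if b then y i else -(y i)) := by
      have : σ 0 = i := Equiv.swap_apply_left _ _
      rw [this]
      cases b <;> simp [hε] <;> ring
    have eabs : ∀ j, |ε j * y (σ j)| = |y (σ j)| := by
      intro j; rw [abs_mul, habs1 j, one_mul]
    have esum : ∑ j, (ε j * y (σ j))^2 = ∑ j, (y j)^2 := by
      have h1 : ∀ j, (ε j * y (σ j))^2 = (y (σ j))^2 := fun j => by
        rw [mul_pow, hsq j, one_mul]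
      simp_rw [h1]
      exact Equiv.sum_comp σ (fun j => (y j)^2)
    constructor
    · rintro ⟨h1, h2⟩
      refine ⟨fun j => ?_, by rwa [esum] at h2⟩
      have := h1 (σ.symm j)
      rwa [eabs, e0, Equiv.apply_symm_apply] at this
    · rintro ⟨h1, h2⟩
      refine ⟨fun j => ?_, by rwa [esum]⟩
      rw [eabs, e0]
      exact h1 _
  calc volume (Mset n i b)
      = volume ((fun (y : Fin (n+1) → ℝ) j => ε j * y (σ j)) ⁻¹' (Mset n 0 true)) := by
        rw [hpre]
    _ = volume (Mset n 0 true) :=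
        hT.measure_preimage (measurableSet_Mset n 0 true).nullMeasurableSet

end SolidAngle

namespace SolidAngle
open Real

lemma cover (n : ℕ) :
    (⋃ p : Fin (n+1) × Bool, Mset n p.1 p.2) = {y : Fin (n+1) → ℝ | ∑ j, (y j)^2 ≤ 1} := by
  ext y
  simp only [Set.mem_iUnion, Mset, Set.mem_setOf_eq]
  constructor
  · rintro ⟨p, _, h2⟩; exact h2
  · intro h
    obtain ⟨i, -, hi⟩ := Finset.exists_max_image Finset.univ (fun j => |y j|)
      ⟨0, Finset.mem_univ _⟩
    by_cases h0 : 0 ≤ y i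
    · exact ⟨(i, true), fun j => by simpa [abs_of_nonneg h0] using hi j (Finset.mem_univ j), h⟩
    · refine ⟨(i, false), fun j => ?_, h⟩
      have := hi j (Finset.mem_univ j)
      rwa [abs_of_neg (lt_of_not_ge h0)] at this
      
lemma aedisj (n : ℕ) :
    Pairwise (Function.onFun (MeasureTheory.AEDisjoint volume)
      (fun p : Fin (n+1) × Bool => Mset n p.1 p.2)) := by
  rintro ⟨i, b⟩ ⟨j, c⟩ hpq
  unfold Function.onFun AEDisjoint
  by_cases hij : i = j
  · subst hij
    have hbc : b ≠ c := fun h => hpq (by rw [h])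
    refine measure_mono_null (fun y hy => ?_) (null_zero_coord i)
    obtain ⟨⟨h1, -⟩, ⟨h2, -⟩⟩ := hy
    have k1 := h1 i
    have k2 := h2 i
    simp only [Set.mem_setOf_eq]
    rcases Bool.eq_false_or_eq_true b with hb | hb <;>
      rcases Bool.eq_false_or_eq_true c with hc | hc <;>
        first
          | (exact absurd (hb.trans hc.symm) hbc)
          | (simp [hb, hc] at k1 k2
             have := abs_nonneg (y i)
             linarith [neg_abs_le (y i), le_abs_self (y i)])
  · have hsub : Mset n i b ∩ Mset n j c ⊆ {y | y i = 1 * y j} ∪ {y | y i = (-1) * y j} := by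
      rintro y ⟨⟨h1, -⟩, ⟨h2, -⟩⟩
      have k1 : |y j| ≤ |y i| := by
        refine le_trans (h1 j) ?_
        cases b <;> simp [le_abs_self, neg_le_abs, neg_abs_le]
      have k2 : |y i| ≤ |y j| := by
        refine le_trans (h2 i) ?_
        cases c <;> simp [le_abs_self, neg_le_abs, neg_abs_le]
      have : |y i| = |y j| := le_antisymm k2 k1
      rcases abs_eq_abs.mp this with h | h
      · left; simpa using h
      · right; simpa using h
    exact measure_mono_null hsub
      (measure_union_null (null_eq_coord i j 1 hij) (null_eq_coord i j (-1) hij))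

lemma vol_ball (n : ℕ) :
    volume {y : Fin (n+1) → ℝ | ∑ j, (y j)^2 ≤ 1}
      = ENNReal.ofReal ((Real.sqrt π)^(n+1) / Real.Gamma ((n+1)/2 + 1)) := by
  have h := MeasureTheory.volume_sum_rpow_le (ι := Fin (n+1)) (p := 2) one_le_two 1
  have hset : {x : Fin (n+1) → ℝ | (∑ i, |x i| ^ (2:ℝ)) ^ ((1:ℝ)/2) ≤ 1}
      = {y : Fin (n+1) → ℝ | ∑ j, (y j)^2 ≤ 1} := by
    ext y
    have hsum : ∑ i, |y i| ^ (2:ℝ) = ∑ j, (y j)^2 := by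
      refine Finset.sum_congr rfl fun i _ => ?_
      rw [Real.rpow_two, sq_abs]
    have h0 : (0:ℝ) ≤ ∑ j, (y j)^2 := Finset.sum_nonneg fun j _ => sq_nonneg _
    simp only [Set.mem_setOf_eq, hsum, ← Real.sqrt_eq_rpow]
    rw [Real.sqrt_le_left zero_le_one, one_pow]
  rw [hset] at h
  rw [h]
  have hG : 2 * Real.Gamma (1/2 + 1) = Real.sqrt π := by
    rw [Real.Gamma_add_one (by norm_num), Real.Gamma_one_half_eq]
    ring
  rw [hG]
  simp only [Fintype.card_fin, ENNReal.ofReal_one, one_pow, one_mul]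
  norm_num

lemma vol_M0 (n : ℕ) :
    (2*(n+1) : ℝ≥0∞) * volume (Mset n 0 true)
      = ENNReal.ofReal ((Real.sqrt π)^(n+1) / Real.Gamma ((n+1)/2 + 1)) := by
  rw [← vol_ball n, ← cover n,
    measure_iUnion₀ (aedisj n) (fun p => (measurableSet_Mset n p.1 p.2).nullMeasurableSet),
    tsum_fintype]
  rw [Finset.sum_congr rfl (fun p _ => volume_Mset n p.1 p.2), Finset.sum_const]
  simp only [Finset.card_univ, Fintype.card_prod, Fintype.card_fin, Fintype.card_bool,
    nsmul_eq_mul]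
  congr 1
  push_cast
  ring

end SolidAngle

namespace SolidAngle
open Real

lemma vol_M0_eq_vol_K (n : ℕ) : volume (Mset n 0 true) = volume (Kset n) := by
  set e := MeasurableEquiv.piFinSuccAbove (fun _ : Fin (n+1) => ℝ) 0 with he
  have hmp := volume_preserving_piFinSuccAbove (fun _ : Fin (n+1) => ℝ) 0
  have hKe : volume (Kset n) = volume (e ⁻¹' Kset n) :=
    (hmp.measure_preimage (measurableSet_Kset n).nullMeasurableSet).symm
  have hes : ∀ y : Fin (n+1) → ℝ, e y = (y 0, fun j => y j.succ) := fun _ => rfl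
  have hsum : ∀ y : Fin (n+1) → ℝ, ∑ j, (y j)^2 = (y 0)^2 + ∑ i : Fin n, (y i.succ)^2 :=
    fun y => Fin.sum_univ_succ _
  have hsub1 : e ⁻¹' Kset n ⊆ Mset n 0 true := by
    intro y hy
    rw [Set.mem_preimage, hes, Kset] at hy
    obtain ⟨h0, h1, h2⟩ := hy
    refine ⟨fun j => ?_, by rw [hsum]; exact h2⟩
    simp only [if_true]
    refine Fin.cases ?_ (fun i => ?_) j
    · rw [abs_of_pos h0]
    · exact h1 i
  have hsub2 : Mset n 0 true ⊆ (e ⁻¹' Kset n) ∪ {y | y 0 = 0} := by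
    rintro y ⟨h1, h2⟩
    simp only [if_true] at h1
    rcases eq_or_lt_of_le (le_trans (abs_nonneg (y 0)) (h1 0)) with h0 | h0
    · right; exact h0.symm
    · left
      rw [Set.mem_preimage, hes, Kset]
      exact ⟨h0, fun i => h1 i.succ, by rw [← hsum]; exact h2⟩
  refine le_antisymm ?_ ?_
  · calc volume (Mset n 0 true) ≤ volume ((e ⁻¹' Kset n) ∪ {y | y 0 = 0}) :=
        measure_mono hsub2
      _ ≤ volume (e ⁻¹' Kset n) + volume {y : Fin (n+1) → ℝ | y 0 = 0} := measure_union_le _ _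
      _ = volume (Kset n) := by rw [null_zero_coord (0 : Fin (n+1)), add_zero, hKe]
  · rw [hKe]; exact measure_mono hsub1

end SolidAngle

namespace SolidAngle
open Real Pointwise

lemma measurableSet_cube (n : ℕ) : MeasurableSet (cube n) :=
  MeasurableSet.univ_pi fun _ => measurableSet_Icc

lemma one_add_S_pos (n : ℕ) (x : Fin n → ℝ) : (0:ℝ) < 1 + ∑ i, (x i)^2 := by
  have : (0:ℝ) ≤ ∑ i, (x i)^2 := Finset.sum_nonneg fun i _ => sq_nonneg _
  linarith

lemma vol_K (n : ℕ) :
    volume (Kset n)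
      = ∫⁻ x in cube n,
          ENNReal.ofReal ((1 + ∑ i, (x i)^2) ^ (-((n:ℝ)+1)/2) / ((n:ℝ)+1)) := by
  classical
  set S : (Fin n → ℝ) → ℝ := fun x => ∑ i, (x i)^2 with hS
  set a : (Fin n → ℝ) → ℝ := fun x => Real.sqrt (1/(1 + S x)) with ha
  have hSnn : ∀ x, 0 ≤ S x := fun x => Finset.sum_nonneg fun i _ => sq_nonneg _
  have h1S : ∀ x, (0:ℝ) < 1 + S x := fun x => one_add_S_pos n x
  -- measurable condition set
  have hcondm : MeasurableSet {p : ℝ × (Fin n → ℝ) | p.1^2 * (1 + S p.2) ≤ 1} := by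
    refine measurableSet_le ?_ measurable_const
    fun_prop
  -- step 1: slices
  have hslice : ∀ t : ℝ, volume (Prod.mk t ⁻¹' Kset n)
      = (Set.Ioi (0:ℝ)).indicator
          (fun t => ENNReal.ofReal (t^n) * volume (cube n ∩ {x | t^2 * (1 + S x) ≤ 1})) t := by
    intro t
    by_cases ht : 0 < t
    · rw [Set.indicator_of_mem (Set.mem_Ioi.mpr ht)]
      have hset : Prod.mk t ⁻¹' Kset n = t • (cube n ∩ {x | t^2 * (1 + S x) ≤ 1}) := by
        ext z
        rw [Set.mem_smul_set_iff_inv_smul_mem₀ (ne_of_gt ht)]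
        simp only [Set.mem_preimage, Kset, Set.mem_setOf_eq, Set.mem_inter_iff, cube,
          Set.mem_pi, Set.mem_univ, forall_true_left, Set.mem_Icc, Pi.smul_apply,
          smul_eq_mul]
        have hsum2 : ∑ i, (t⁻¹ * z i)^2 = t⁻¹^2 * ∑ i, (z i)^2 := by
          rw [Finset.mul_sum]; exact Finset.sum_congr rfl fun i _ => by ring
        have habseq : ∀ i, (-1 ≤ t⁻¹ * z i ∧ t⁻¹ * z i ≤ 1) ↔ |z i| ≤ t := by
          intro i
          rw [← abs_le, inv_mul_eq_div, abs_div, abs_of_pos ht, div_le_one ht]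
        have hsumeq : t^2 * (1 + S (t⁻¹ • z)) = t^2 + S z := by
          simp only [hS, Pi.smul_apply, smul_eq_mul]
          rw [hsum2]
          field_simp
        constructor
        · rintro ⟨-, h1, h2⟩
          refine ⟨fun i => (habseq i).mpr (h1 i), ?_⟩
          rw [hsumeq]; exact h2
        · rintro ⟨h1, h2⟩
          rw [hsumeq] at h2
          exact ⟨ht, fun i => (habseq i).mp (h1 i), h2⟩
      rw [hset, Measure.addHaar_smul, abs_of_pos (pow_pos ht _),
        Module.finrank_pi, Fintype.card_fin]
    · rw [Set.indicator_of_notMem (by simpa using ht)]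
      have : Prod.mk t ⁻¹' Kset n = ∅ := by
        ext z; simp only [Set.mem_preimage, Kset, Set.mem_setOf_eq, Set.mem_empty_iff_false,
          iff_false]
        rintro ⟨h0, -, -⟩; exact ht h0
      rw [this, measure_empty]
  -- step 2: volume as double lintegral
  have hdouble : volume (Kset n)
      = ∫⁻ t in Set.Ioi (0:ℝ), ∫⁻ x in cube n,
          (if t^2 * (1 + S x) ≤ 1 then ENNReal.ofReal (t^n) else 0) := by
    rw [Measure.volume_eq_prod, Measure.prod_apply (measurableSet_Kset n)]
    have : ∀ t : ℝ, (∫⁻ x in cube n,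
          (if t^2 * (1 + S x) ≤ 1 then ENNReal.ofReal (t^n) else 0))
        = ENNReal.ofReal (t^n) * volume (cube n ∩ {x | t^2 * (1 + S x) ≤ 1}) := by
      intro t
      have : (fun x => if t^2 * (1 + S x) ≤ 1 then ENNReal.ofReal (t^n) else 0)
          = Set.indicator {x | t^2 * (1 + S x) ≤ 1} (fun _ => ENNReal.ofReal (t^n)) := by
        funext x
        rw [Set.indicator_apply]
        rfl
      rw [this, lintegral_indicator_const
        (measurableSet_le (by fun_prop) measurable_const),
        Measure.restrict_apply (measurableSet_le (by fun_prop) measurable_const),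
        Set.inter_comm]
    simp_rw [this]
    rw [← lintegral_indicator measurableSet_Ioi]
    exact lintegral_congr fun t => (hslice t).symm ▸ rfl
  rw [hdouble]
  -- step 3: swap
  rw [lintegral_lintegral_swap]
  swap
  · apply Measurable.aemeasurable
    apply Measurable.ite
    · exact measurableSet_le (by fun_prop) measurable_const
    · fun_prop
    · fun_prop
  -- step 4: inner integral
  refine lintegral_congr fun x => ?_
  have hax : 0 ≤ a x := Real.sqrt_nonneg _
  have hiff : ∀ t ∈ Set.Ioi (0:ℝ), (t^2 * (1 + S x) ≤ 1 ↔ t ≤ a x) := by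
    intro t ht
    rw [ha, Real.le_sqrt (le_of_lt ht) (by positivity), le_div_iff₀ (h1S x)]
  have hinner : (∫⁻ t in Set.Ioi (0:ℝ),
        (if t^2 * (1 + S x) ≤ 1 then ENNReal.ofReal (t^n) else 0))
      = ∫⁻ t in Set.Ioc 0 (a x), ENNReal.ofReal (t^n) := by
    rw [setLIntegral_congr_fun measurableSet_Ioi
      ((fun t ht => by
        rw [show (if t^2 * (1 + S x) ≤ 1 then ENNReal.ofReal (t^n) else 0)
            = Set.indicator (Set.Iic (a x)) (fun t => ENNReal.ofReal (t^n)) t by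
          rw [Set.indicator_apply]
          simp only [Set.mem_Iic]
          rw [if_congr (hiff t ht) rfl rfl]]))]
    rw [lintegral_indicator measurableSet_Iic, Measure.restrict_restrict measurableSet_Iic,
      Set.Iic_inter_Ioi]
  rw [hinner]
  -- step 5: evaluate the inner integral
  have hint : IntegrableOn (fun t : ℝ => t^n) (Set.Ioc 0 (a x)) volume :=
    (continuous_pow n).integrableOn_Ioc
  have hnn : 0 ≤ᵐ[volume.restrict (Set.Ioc 0 (a x))] fun t : ℝ => t^n :=
    (ae_restrict_iff' measurableSet_Ioc).mpr (ae_of_all _ fun t ht => pow_nonneg ht.1.le n)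
  rw [← MeasureTheory.ofReal_integral_eq_lintegral_ofReal hint hnn]
  have hval : ∫ t in Set.Ioc (0:ℝ) (a x), t^n = (a x)^(n+1) / ((n:ℝ)+1) := by
    rw [← intervalIntegral.integral_of_le hax, integral_pow]
    push_cast
    ring
  rw [hval]
  congr 1
  -- step 6: rpow algebra
  have harpow : a x = (1 + S x) ^ (-(1/2) : ℝ) := by
    rw [show a x = Real.sqrt (1/(1 + S x)) from rfl, Real.sqrt_eq_rpow, one_div,
      Real.inv_rpow (h1S x).le, ← Real.rpow_neg (h1S x).le]
  rw [harpow, ← Real.rpow_natCast ((1 + S x) ^ (-(1/2) : ℝ)) (n+1),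
    ← Real.rpow_mul (h1S x).le]
  have hexp : (-(1/2) : ℝ) * ((n+1 : ℕ) : ℝ) = -((n:ℝ)+1)/2 := by push_cast; ring
  rw [hexp]

end SolidAngle

namespace SolidAngle
open Real

lemma main (n : ℕ) :
    (∫ x : Fin n → ℝ in cube n, (1 + ∑ i, (x i)^2) ^ (-((n:ℝ)+1)/2))
      = (1/((n:ℝ)+1)) * π ^ (((n:ℝ)+1)/2) / Real.Gamma (((n:ℝ)+1)/2) := by
  classical
  set V : ℝ := (Real.sqrt π)^(n+1) / Real.Gamma (((n:ℝ)+1)/2 + 1) with hV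
  have hΓpos : 0 < Real.Gamma (((n:ℝ)+1)/2 + 1) := Real.Gamma_pos_of_pos (by positivity)
  have hVnn : 0 ≤ V := div_nonneg (pow_nonneg (Real.sqrt_nonneg _) _) hΓpos.le
  set f : (Fin n → ℝ) → ℝ := fun x => (1 + ∑ i, (x i)^2) ^ (-((n:ℝ)+1)/2) with hf
  have hfnn : ∀ x, 0 ≤ f x := fun x => Real.rpow_nonneg (one_add_S_pos n x).le _
  have hfc : Continuous f := by
    apply Continuous.rpow_const
    · fun_prop
    · intro x; left; exact ne_of_gt (one_add_S_pos n x)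
  set I := ∫⁻ x in cube n, ENNReal.ofReal (f x) with hI
  have hcast : ((2*(n+1) : ℝ≥0∞)) = 2 * ENNReal.ofReal ((n:ℝ)+1) := by
    rw [ENNReal.ofReal_add (Nat.cast_nonneg n) zero_le_one]
    simp
  have key : 2 * I = ENNReal.ofReal V := by
    have h1 := vol_M0 n
    rw [vol_M0_eq_vol_K, vol_K] at h1
    have h2 : ∀ x : Fin n → ℝ,
        ENNReal.ofReal ((1 + ∑ i, (x i)^2) ^ (-((n:ℝ)+1)/2) / ((n:ℝ)+1))
          = ENNReal.ofReal (f x) * ENNReal.ofReal (((n:ℝ)+1)⁻¹) := by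
      intro x
      rw [div_eq_mul_inv, ENNReal.ofReal_mul (hfnn x)]
    simp_rw [h2] at h1
    rw [lintegral_mul_const' _ _ ENNReal.ofReal_ne_top, ← hI] at h1
    have hcv : ENNReal.ofReal ((n:ℝ)+1) * ENNReal.ofReal (((n:ℝ)+1)⁻¹) = 1 := by
      rw [← ENNReal.ofReal_mul (by positivity), mul_inv_cancel₀ (by positivity)]
      exact ENNReal.ofReal_one
    calc 2 * I = 2 * I * (ENNReal.ofReal ((n:ℝ)+1) * ENNReal.ofReal (((n:ℝ)+1)⁻¹)) := by
          rw [hcv, mul_one]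
      _ = (2 * ENNReal.ofReal ((n:ℝ)+1)) * (I * ENNReal.ofReal (((n:ℝ)+1)⁻¹)) := by
          rw [mul_mul_mul_comm]
      _ = ENNReal.ofReal V := by rw [← hcast, h1, hV]
  have hIval : I = ENNReal.ofReal (V/2) := by
    have h3 : ENNReal.ofReal V = 2 * ENNReal.ofReal (V/2) := by
      rw [show V = 2 * (V/2) by ring, ENNReal.ofReal_mul (by norm_num : (0:ℝ) ≤ 2)]
      norm_num
    rw [h3] at key
    exact (ENNReal.mul_right_inj (by norm_num) (by norm_num)).mp key
  have hmi : (∫ x : Fin n → ℝ in cube n, f x) = I.toReal := by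
    rw [hI, integral_eq_lintegral_of_nonneg_ae (ae_of_all _ hfnn)
      hfc.aestronglyMeasurable]
  rw [show (∫ x : Fin n → ℝ in cube n, (1 + ∑ i, (x i)^2) ^ (-((n:ℝ)+1)/2))
      = ∫ x : Fin n → ℝ in cube n, f x from rfl, hmi, hIval,
    ENNReal.toReal_ofReal (by positivity)]
  -- final real algebra
  have hsqrt : (Real.sqrt π)^(n+1) = π ^ (((n:ℝ)+1)/2) := by
    rw [Real.sqrt_eq_rpow, ← Real.rpow_natCast (π ^ ((1:ℝ)/2)) (n+1),
      ← Real.rpow_mul Real.pi_pos.le]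
    congr 1
    push_cast
    ring
  have hΓ : Real.Gamma (((n:ℝ)+1)/2 + 1) = (((n:ℝ)+1)/2) * Real.Gamma (((n:ℝ)+1)/2) :=
    Real.Gamma_add_one (by positivity)
  have hΓpos2 : 0 < Real.Gamma (((n:ℝ)+1)/2) := Real.Gamma_pos_of_pos (by positivity)
  rw [hV, hsqrt, hΓ]
  have hn1 : ((n:ℝ)+1) ≠ 0 := by positivity
  field_simp

end SolidAngle


/-- For every dimension `d ≥ 1`, the integral over the cube `[-1,1]^{d-1}` of
`1/(1 + x₁² + ⋯ + x_{d-1}²)^{d/2}` equals `(1/d) · π^{d/2} / Γ(d/2)`. -/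
theorem stmt0 (d : ℕ) (hd : 1 ≤ d) :
    (∫ x : Fin (d - 1) → ℝ in Set.pi Set.univ (fun _ => Set.Icc (-1 : ℝ) 1),
      (1 + ∑ i, (x i) ^ 2) ^ (-(d : ℝ) / 2))
    = (1 / d) * Real.pi ^ ((d : ℝ) / 2) / Real.Gamma ((d : ℝ) / 2) := by
  obtain ⟨n, rfl⟩ : ∃ n, d = n + 1 := ⟨d - 1, (Nat.succ_pred_eq_of_pos hd).symm⟩
  have h := SolidAngle.main n
  rw [SolidAngle.cube] at h
  have hcast : ((n+1 : ℕ) : ℝ) = (n:ℝ) + 1 := by push_cast; ring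
  push_cast
  exact h
end
end

section
/- For d ≥ 1 and N ≥ 1, define V_N(s) = N^{-(d-1)} Σ_{-N ≤ n_i < N, i=1..d-1} (1 + (n_1/N)^2 + ... + (n_{d-1}/N)^2)^{-(s+1)} and V(s) = ∫_{[-1,1]^{d-1}} (1 + x_1^2 + ... + x_{d-1}^2)^{-(s+1)} dx. Then for all s with Re(s) ≥ -2, |V(s) − V_N(s)| ≤ 2^d (d−1) |s+1| / N. -/
open MeasureTheory

lemma cpow_lip {lam : ℂ} (hlam : lam.re ≤ 1) {a b : ℝ} (ha : 1 ≤ a) (hb : 1 ≤ b) :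
    ‖(a:ℂ)^lam - (b:ℂ)^lam‖ ≤ ‖lam‖ * |a - b| := by
  have key := (convex_Ici (1:ℝ)).norm_image_sub_le_of_norm_hasDerivWithin_le
    (f := fun t : ℝ => (t:ℂ) ^ lam) (f' := fun t : ℝ => lam * (t:ℂ) ^ (lam - 1))
    (C := ‖lam‖) ?_ ?_ hb ha
  · simpa [Real.norm_eq_abs] using key
  · intro t ht
    have h0 : ((t:ℂ)) ∈ Complex.slitPlane :=
      Complex.ofReal_mem_slitPlane.2 (lt_of_lt_of_le one_pos ht)
    exact ((Complex.hasStrictDerivAt_cpow_const (c := lam) h0).hasDerivAt.comp_ofReal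
      (z := t)).hasDerivWithinAt
  · intro t ht
    have ht0 : (0:ℝ) < t := lt_of_lt_of_le one_pos ht
    rw [norm_mul]
    have h2 : ‖(t:ℂ) ^ (lam - 1)‖ = t ^ (lam - 1).re := by
      rw [Complex.norm_cpow_eq_rpow_re_of_pos ht0]
    have h1 : t ^ (lam - 1).re ≤ 1 :=
      Real.rpow_le_one_of_one_le_of_nonpos ht (by simp [Complex.sub_re]; linarith)
    rw [h2]
    nlinarith [norm_nonneg lam]

lemma main_aux (m N : ℕ) (hN : 1 ≤ N) (lam : ℂ) (hlam : lam.re ≤ 1) :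
    ‖(∫ x : Fin m → ℝ in Set.pi Set.univ (fun _ => Set.Icc (-1 : ℝ) 1),
        ((1 + ∑ i, (x i) ^ 2 : ℝ) : ℂ) ^ lam)
      - ((N : ℂ) ^ m)⁻¹ *
          ∑ n ∈ Fintype.piFinset (fun _ : Fin m => Finset.Ico (-(N : ℤ)) (N : ℤ)),
            ((1 + ∑ i, ((n i : ℝ) / N) ^ 2 : ℝ) : ℂ) ^ lam‖
    ≤ 2 ^ m * (2 * m * ‖lam‖ / N) := by
  have hNpos : (0:ℝ) < N := by exact_mod_cast hN
  set f : (Fin m → ℝ) → ℂ := fun x => ((1 + ∑ i, (x i) ^ 2 : ℝ) : ℂ) ^ lam with hf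
  set cube : (Fin m → ℤ) → Set (Fin m → ℝ) :=
    fun n => Set.pi Set.univ fun i => Set.Ico ((n i : ℝ)/N) (((n i : ℝ)+1)/N) with hcube
  set 𝒩 := Fintype.piFinset (fun _ : Fin m => Finset.Ico (-(N : ℤ)) (N : ℤ)) with h𝒩
  have hbase : ∀ x : Fin m → ℝ, (1:ℝ) ≤ 1 + ∑ i, (x i)^2 := fun x =>
    le_add_of_nonneg_right (by positivity)
  have hfc : Continuous f := by
    apply Continuous.cpow
    · exact Complex.continuous_ofReal.comp (by continuity)
    · exact continuous_const
    · intro x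
      exact Complex.ofReal_mem_slitPlane.2 (lt_of_lt_of_le one_pos (hbase x))
  have hmeas : ∀ n : Fin m → ℤ, MeasurableSet (cube n) := fun n =>
    MeasurableSet.univ_pi fun i => measurableSet_Ico
  have hInt : IntegrableOn f (Set.pi Set.univ fun _ => Set.Icc (-1 : ℝ) 1) :=
    hfc.continuousOn.integrableOn_compact (isCompact_univ_pi fun i => isCompact_Icc)
  have hsub : ∀ n ∈ 𝒩, cube n ⊆ Set.pi Set.univ fun _ => Set.Icc (-1 : ℝ) 1 := by
    intro n hn x hx i _
    have h1 : -(N:ℤ) ≤ n i ∧ n i < N := by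
      have := (Fintype.mem_piFinset.1 hn) i
      simpa [Finset.mem_Ico] using this
    have hx1 : (n i : ℝ)/N ≤ x i ∧ x i < ((n i : ℝ)+1)/N := by
      have := hx i (Set.mem_univ i); simpa [Set.mem_Ico] using this
    have hln : (-N : ℝ) ≤ (n i : ℝ) := by exact_mod_cast h1.1
    have hun : ((n i : ℝ) + 1) ≤ N := by exact_mod_cast h1.2
    constructor
    · have : (-1 : ℝ) ≤ (n i : ℝ)/N := by
        rw [le_div_iff₀ hNpos]; linarith
      linarith [hx1.1]
    · have : ((n i : ℝ)+1)/N ≤ 1 := by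
        rw [div_le_one hNpos]; linarith
      linarith [hx1.2]
  have hIntCube : ∀ n ∈ 𝒩, IntegrableOn f (cube n) := fun n hn =>
    hInt.mono_set (hsub n hn)
  have hvol : ∀ n : Fin m → ℤ, volume (cube n) = ENNReal.ofReal ((1:ℝ)/N) ^ m := by
    intro n
    have hlen : ∀ i : Fin m, ((n i : ℝ)+1)/N - (n i : ℝ)/N = 1/N := fun i => by
      field_simp
      ring
    rw [hcube]
    rw [volume_pi_pi]
    simp only [Real.volume_Ico, hlen]
    rw [Finset.prod_const, Finset.card_univ, Fintype.card_fin]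
  have hvolR : ∀ n : Fin m → ℤ, (volume (cube n)).toReal = ((1:ℝ)/N) ^ m := by
    intro n
    rw [hvol n, ENNReal.toReal_pow, ENNReal.toReal_ofReal (by positivity)]
  have hUnion : (⋃ n ∈ 𝒩, cube n) = Set.pi Set.univ fun _ => Set.Ico (-1 : ℝ) 1 := by
    ext x
    simp only [h𝒩, hcube, Set.mem_iUnion, Set.mem_pi, Set.mem_univ, true_implies,
      Set.mem_Ico, Fintype.mem_piFinset, Finset.mem_Ico]
    constructor
    · rintro ⟨n, hn, hx⟩ i
      obtain ⟨h1, h2⟩ := hn i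
      obtain ⟨h3, h4⟩ := hx i
      have hln : (-N:ℝ) ≤ (n i : ℝ) := by exact_mod_cast h1
      have hun : ((n i : ℝ)+1) ≤ N := by exact_mod_cast h2
      constructor
      · have : (-1:ℝ) ≤ (n i : ℝ)/N := by rw [le_div_iff₀ hNpos]; linarith
        linarith
      · have : ((n i : ℝ)+1)/N ≤ 1 := by rw [div_le_one hNpos]; linarith
        linarith
    · intro hx
      refine ⟨fun i => ⌊x i * N⌋, fun i => ⟨?_, ?_⟩, fun i => ⟨?_, ?_⟩⟩
      · rw [Int.le_floor]; push_cast; nlinarith [(hx i).1]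
      · rw [Int.floor_lt]; push_cast; nlinarith [(hx i).2]
      · rw [div_le_iff₀ hNpos]; exact Int.floor_le _
      · rw [lt_div_iff₀ hNpos]; push_cast; exact Int.lt_floor_add_one _
  have hdisj : Set.Pairwise ↑𝒩 (Function.onFun Disjoint cube) := by
    intro a _ b _ hab
    rw [Function.onFun, Set.disjoint_left]
    intro x hxa hxb
    apply hab
    funext i
    have h1 := hxa i (Set.mem_univ i)
    have h2 := hxb i (Set.mem_univ i)
    simp only [Set.mem_Ico] at h1 h2
    have ekey : ∀ k : ℤ, (k : ℝ)/N ≤ x i → x i < ((k:ℝ)+1)/N → k = ⌊x i * N⌋ := by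
      intro k hk1 hk2
      symm
      rw [Int.floor_eq_iff]
      constructor
      · rw [div_le_iff₀ hNpos] at hk1; exact_mod_cast hk1
      · rw [lt_div_iff₀ hNpos] at hk2; push_cast; linarith
    rw [ekey (a i) h1.1 h1.2, ekey (b i) h2.1 h2.2]
  have hkey : ∀ n ∈ 𝒩, ‖(∫ x in cube n, f x)
      - (((1:ℝ)/N) ^ m : ℝ) • f (fun i => (n i : ℝ)/N)‖
      ≤ (2 * m * ‖lam‖ / N) * ((1:ℝ)/N) ^ m := by
    intro n hn
    have hvlt : volume (cube n) < ⊤ := by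
      rw [hvol n]; exact ENNReal.pow_lt_top ENNReal.ofReal_lt_top
    have hnbd : ∀ i : Fin m, (-1:ℝ) ≤ (n i : ℝ)/N ∧ (n i : ℝ)/N ≤ 1 := by
      intro i
      have h1 : -(N:ℤ) ≤ n i ∧ n i < N := by
        have := (Fintype.mem_piFinset.1 hn) i
        simpa [Finset.mem_Ico] using this
      have hln : (-N : ℝ) ≤ (n i : ℝ) := by exact_mod_cast h1.1
      have hun : (n i : ℝ) ≤ N := by exact_mod_cast le_of_lt h1.2
      constructor
      · rw [le_div_iff₀ hNpos]; linarith
      · rw [div_le_one hNpos]; linarith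
    have hpt : ∀ x ∈ cube n, ‖f x - f (fun i => (n i : ℝ)/N)‖ ≤ 2 * m * ‖lam‖ / N := by
      intro x hx
      have hxIcc := hsub n hn hx
      refine le_trans (cpow_lip hlam (hbase x) (hbase _)) ?_
      have habs : |(1 + ∑ i, (x i)^2) - (1 + ∑ i, ((n i : ℝ)/N)^2)| ≤ 2*m/N := by
        have hre : (1 + ∑ i, (x i)^2) - (1 + ∑ i, ((n i : ℝ)/N)^2)
            = ∑ i, ((x i)^2 - ((n i : ℝ)/N)^2) := by
          rw [Finset.sum_sub_distrib]; ring
        rw [hre]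
        have perI : ∀ i : Fin m, |(x i)^2 - ((n i : ℝ)/N)^2| ≤ 2/N := by
          intro i
          have hxi : (n i : ℝ)/N ≤ x i ∧ x i < ((n i : ℝ)+1)/N := by
            have := hx i (Set.mem_univ i); simpa [Set.mem_Ico] using this
          have hxI : (-1:ℝ) ≤ x i ∧ x i ≤ 1 := by
            have := hxIcc i (Set.mem_univ i); simpa [Set.mem_Icc] using this
          have hci := hnbd i
          have hfact : (x i)^2 - ((n i : ℝ)/N)^2
              = (x i - (n i : ℝ)/N) * (x i + (n i : ℝ)/N) := by ring
          have hd1 : |x i - (n i : ℝ)/N| ≤ 1/N := by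
            rw [abs_le]
            have : ((n i : ℝ)+1)/N = (n i : ℝ)/N + 1/N := by ring
            constructor
            · have h0 : (0:ℝ) < 1/N := by positivity
              linarith [hxi.1]
            · nlinarith [hxi.2]
          have hd2 : |x i + (n i : ℝ)/N| ≤ 2 := by
            rw [abs_le]; constructor <;> nlinarith [hxI.1, hxI.2, hci.1, hci.2]
          rw [hfact, abs_mul]
          calc |x i - (n i : ℝ)/N| * |x i + (n i : ℝ)/N| ≤ (1/N) * 2 := by
                apply mul_le_mul hd1 hd2 (abs_nonneg _) (by positivity)
            _ = 2/N := by ring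
        calc |∑ i, ((x i)^2 - ((n i : ℝ)/N)^2)| ≤ ∑ i, |(x i)^2 - ((n i : ℝ)/N)^2| :=
              Finset.abs_sum_le_sum_abs _ _
          _ ≤ ∑ _i : Fin m, (2/(N:ℝ)) := Finset.sum_le_sum (fun i _ => perI i)
          _ = (m:ℝ) * (2/N) := by rw [Finset.sum_const, Finset.card_univ, Fintype.card_fin,
                nsmul_eq_mul]
          _ = 2*m/N := by ring
      calc ‖lam‖ * |(1 + ∑ i, (x i)^2) - (1 + ∑ i, ((n i : ℝ)/N)^2)|
           ≤ ‖lam‖ * (2*m/N) := mul_le_mul_of_nonneg_left habs (norm_nonneg _)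
        _ = 2 * m * ‖lam‖ / N := by ring
    have hconst : ((((1:ℝ)/N) ^ m : ℝ)) • f (fun i => (n i : ℝ)/N)
        = ∫ _x in cube n, f (fun i => (n i : ℝ)/N) := by
      rw [setIntegral_const, measureReal_def, hvolR n]
    rw [hconst, ← integral_sub (hIntCube n hn) (integrableOn_const hvlt.ne)]
    calc ‖∫ x in cube n, (f x - f (fun i => (n i : ℝ)/N))‖
        ≤ (2 * m * ‖lam‖ / N) * (volume (cube n)).toReal :=
          norm_setIntegral_le_of_norm_le_const hvlt hpt
      _ = (2 * m * ‖lam‖ / N) * ((1:ℝ)/N) ^ m := by rw [hvolR n]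
  have hcount : 𝒩.card = (2 * N) ^ m := by
    rw [h𝒩, Fintype.card_piFinset]
    have : (Finset.Ico (-(N:ℤ)) (N:ℤ)).card = 2 * N := by
      rw [Int.card_Ico]; omega
    rw [this, Finset.prod_const, Finset.card_univ, Fintype.card_fin]
  -- rewrite integral over Icc as integral over Ico
  have haeeq : (Set.pi Set.univ fun _ : Fin m => Set.Ico (-1 : ℝ) 1)
      =ᵐ[volume] (Set.pi Set.univ fun _ : Fin m => Set.Icc (-1 : ℝ) 1) := by
    have h1 : volume (Set.pi Set.univ fun _ : Fin m => Set.Icc (-1 : ℝ) 1)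
        = ENNReal.ofReal 2 ^ m := by
      rw [volume_pi_pi]
      simp only [Real.volume_Icc]
      norm_num
    have h2 : volume (Set.pi Set.univ fun _ : Fin m => Set.Ico (-1 : ℝ) 1)
        = ENNReal.ofReal 2 ^ m := by
      rw [volume_pi_pi]
      simp only [Real.volume_Ico]
      norm_num
    exact ae_eq_of_subset_of_measure_ge
      (Set.pi_mono fun i _ => Set.Ico_subset_Icc_self)
      (le_of_eq (h1.trans h2.symm))
      ((MeasurableSet.univ_pi fun _ => measurableSet_Ico).nullMeasurableSet)
      (by rw [h1]; exact (ENNReal.pow_lt_top ENNReal.ofReal_lt_top).ne)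
  have hsplit : (∫ x : Fin m → ℝ in Set.pi Set.univ (fun _ => Set.Icc (-1 : ℝ) 1), f x)
      = ∑ n ∈ 𝒩, ∫ x in cube n, f x := by
    rw [← setIntegral_congr_set haeeq, ← hUnion,
      integral_biUnion_finset 𝒩 (fun n _ => hmeas n) hdisj hIntCube]
  have hsum2 : ((N : ℂ) ^ m)⁻¹ *
      ∑ n ∈ 𝒩, ((1 + ∑ i, ((n i : ℝ) / N) ^ 2 : ℝ) : ℂ) ^ lam
      = ∑ n ∈ 𝒩, (((1:ℝ)/N) ^ m : ℝ) • f (fun i => (n i : ℝ)/N) := by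
    rw [Finset.mul_sum]
    refine Finset.sum_congr rfl fun n _ => ?_
    have hpow : ((((1:ℝ)/N) ^ m : ℝ) : ℂ) = ((N : ℂ) ^ m)⁻¹ := by
      push_cast; rw [one_div, inv_pow]
    rw [Complex.real_smul, hpow]
  rw [hsplit, hsum2, ← Finset.sum_sub_distrib]
  calc ‖∑ n ∈ 𝒩, ((∫ x in cube n, f x) - (((1:ℝ)/N) ^ m : ℝ) • f (fun i => (n i : ℝ)/N))‖
      ≤ ∑ n ∈ 𝒩, ‖(∫ x in cube n, f x) - (((1:ℝ)/N) ^ m : ℝ) • f (fun i => (n i : ℝ)/N)‖ :=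
        norm_sum_le _ _
    _ ≤ ∑ _n ∈ 𝒩, (2 * m * ‖lam‖ / N) * ((1:ℝ)/N) ^ m := Finset.sum_le_sum hkey
    _ = (2 * N : ℝ) ^ m * ((2 * m * ‖lam‖ / N) * ((1:ℝ)/N) ^ m) := by
        rw [Finset.sum_const, hcount, nsmul_eq_mul]; push_cast; ring
    _ = 2 ^ m * (2 * m * ‖lam‖ / N) := by
        have h1 : (2 * N : ℝ) ^ m * ((1:ℝ)/N) ^ m = 2 ^ m := by
          rw [← mul_pow]; congr 1; field_simp
        calc (2 * N : ℝ) ^ m * ((2 * m * ‖lam‖ / N) * ((1:ℝ)/N) ^ m)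
            = ((2 * N : ℝ) ^ m * ((1:ℝ)/N) ^ m) * (2 * m * ‖lam‖ / N) := by ring
          _ = 2 ^ m * (2 * m * ‖lam‖ / N) := by rw [h1]

/-- With `V_N(s) = N^{-(d-1)} Σ_{-N ≤ n_i < N} (1 + Σ (n_i/N)²)^{-(s+1)}` and
`V(s) = ∫_{[-1,1]^{d-1}} (1 + Σ x_i²)^{-(s+1)} dx`, one has, for `Re(s) ≥ -2`,
`|V(s) − V_N(s)| ≤ 2^d (d−1) |s+1| / N`. -/
theorem stmt13 (d : ℕ) (hd : 1 ≤ d) (N : ℕ) (hN : 1 ≤ N) (s : ℂ) (hs : -2 ≤ s.re) :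
    ‖(∫ x : Fin (d - 1) → ℝ in Set.pi Set.univ (fun _ => Set.Icc (-1 : ℝ) 1),
        ((1 + ∑ i, (x i) ^ 2 : ℝ) : ℂ) ^ (-(s + 1)))
      - ((N : ℂ) ^ (d - 1 : ℕ))⁻¹ *
          ∑ n ∈ Fintype.piFinset (fun _ : Fin (d - 1) => Finset.Ico (-(N : ℤ)) (N : ℤ)),
            ((1 + ∑ i, ((n i : ℝ) / N) ^ 2 : ℝ) : ℂ) ^ (-(s + 1))‖
    ≤ 2 ^ d * (d - 1 : ℝ) * ‖s + 1‖ / N := by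
  have hlam : (-(s+1)).re ≤ 1 := by
    simp only [Complex.neg_re, Complex.add_re, Complex.one_re]
    linarith
  refine le_trans (main_aux (d-1) N hN (-(s+1)) hlam) (le_of_eq ?_)
  rw [norm_neg]
  have hm : ((d-1:ℕ):ℝ) = (d:ℝ) - 1 := by
    push_cast [Nat.cast_sub hd]; ring
  have h2 : (2:ℝ)^d = 2^(d-1) * 2 := by
    rw [← pow_succ]
    congr 1
    omega
  rw [hm, h2]
  ring
end

section
/- Let Q(x) = a x_1^2 + b x_2^2 with a, b > 0 and define V_Q(s) = ∫_{‖x‖_∞=1} Q_{B(s)}(x)/Q_A(x)^{s+2} dλ_1 where A = diag(a,b) and B(s) = tr(A)A − 2(s+1)A². Then V_Q'(0) = −8 [√(b/a) · arctan√(a/b) + √(a/b) · arctan√(b/a)]. -/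
open MeasureTheory Matrix

/-- The induced measure on the boundary of the square `{x : ‖x‖_∞ = 1}` in `ℝ²`
(and in general the cube boundary in `ℝ^d`). -/
noncomputable def cubeSurface (d : ℕ) : Measure (Fin d → ℝ) :=
  Measure.sum fun p : Fin d × Bool =>
    Measure.pi fun i =>
      if i = p.1 then Measure.dirac (if p.2 then (1 : ℝ) else -1)
      else volume.restrict (Set.Icc (-1 : ℝ) 1)

namespace Stmt15Aux

noncomputable def nu : Measure ℝ := volume.restrict (Set.Icc (-1 : ℝ) 1)

instance : IsFiniteMeasure nu := by unfold nu; exact inferInstance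

lemma me_left (c : ℝ) : MeasurableEmbedding (fun t : ℝ => ![c, t]) :=
  ((MeasurableEquiv.piFinTwo fun _ => ℝ).symm.measurableEmbedding).comp
    (measurableEmbedding_prodMk_left c)

lemma me_right (c : ℝ) : MeasurableEmbedding (fun t : ℝ => ![t, c]) :=
  ((MeasurableEquiv.piFinTwo fun _ => ℝ).symm.measurableEmbedding).comp
    (measurableEmbedding_prod_mk_right c)

instance instSF (c : ℝ) (j : Fin 2) (i : Fin 2) :
    SigmaFinite ((fun i : Fin 2 => if i = j then Measure.dirac c else nu) i) := by
  dsimp only; split <;> infer_instance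

lemma pi_dirac_left (c : ℝ) :
    Measure.pi (fun i : Fin 2 => if i = 0 then Measure.dirac c else nu)
      = Measure.map (fun t => ![c, t]) nu := by
  have h := (MeasureTheory.measurePreserving_piFinTwo
    (μ := fun i : Fin 2 => if i = (0 : Fin 2) then Measure.dirac c else nu)).symm
  rw [← h.map_eq,
    show (if (0:Fin 2) = 0 then Measure.dirac c else nu) = Measure.dirac c from rfl,
    show (if (1:Fin 2) = 0 then Measure.dirac c else nu) = nu from rfl,
    Measure.dirac_prod,
    Measure.map_map ((MeasurableEquiv.piFinTwo fun _ => ℝ).symm.measurable)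
      measurable_prodMk_left]
  congr 1

lemma pi_dirac_right (c : ℝ) :
    Measure.pi (fun i : Fin 2 => if i = 1 then Measure.dirac c else nu)
      = Measure.map (fun t => ![t, c]) nu := by
  have h := (MeasureTheory.measurePreserving_piFinTwo
    (μ := fun i : Fin 2 => if i = (1 : Fin 2) then Measure.dirac c else nu)).symm
  rw [← h.map_eq,
    show (if (0:Fin 2) = 1 then Measure.dirac c else nu) = nu from rfl,
    show (if (1:Fin 2) = 1 then Measure.dirac c else nu) = Measure.dirac c from rfl,
    Measure.prod_dirac,
    Measure.map_map ((MeasurableEquiv.piFinTwo fun _ => ℝ).symm.measurable)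
      measurable_prodMk_right]
  congr 1

lemma cubeSurface_two :
    cubeSurface 2 = Measure.map (fun t => ![1, t]) nu + Measure.map (fun t => ![-1, t]) nu
      + (Measure.map (fun t => ![t, 1]) nu + Measure.map (fun t => ![t, -1]) nu) := by
  rw [cubeSurface, Measure.sum_fintype, Fintype.sum_prod_type, Fin.sum_univ_two]
  simp only [Fintype.sum_bool, if_true, Bool.false_eq_true, if_false]
  rw [show (volume.restrict (Set.Icc (-1:ℝ) 1)) = nu from rfl,
    pi_dirac_left 1, pi_dirac_left (-1), pi_dirac_right 1, pi_dirac_right (-1)]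

lemma integral_cubeSurface_two (F : (Fin 2 → ℝ) → ℝ)
    (h1 : Integrable (fun t => F ![1, t]) nu) (h2 : Integrable (fun t => F ![-1, t]) nu)
    (h3 : Integrable (fun t => F ![t, 1]) nu) (h4 : Integrable (fun t => F ![t, -1]) nu) :
    ∫ x, F x ∂(cubeSurface 2) = (∫ t, F ![1, t] ∂nu) + (∫ t, F ![-1, t] ∂nu)
      + ((∫ t, F ![t, 1] ∂nu) + (∫ t, F ![t, -1] ∂nu)) := by
  have i1 : Integrable F (Measure.map (fun t => ![(1:ℝ), t]) nu) :=
    (me_left 1).integrable_map_iff.2 h1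
  have i2 : Integrable F (Measure.map (fun t => ![(-1:ℝ), t]) nu) :=
    (me_left (-1)).integrable_map_iff.2 h2
  have i3 : Integrable F (Measure.map (fun t => ![t, (1:ℝ)]) nu) :=
    (me_right 1).integrable_map_iff.2 h3
  have i4 : Integrable F (Measure.map (fun t => ![t, (-1:ℝ)]) nu) :=
    (me_right (-1)).integrable_map_iff.2 h4
  rw [cubeSurface_two, integral_add_measure (i1.add_measure i2) (i3.add_measure i4),
    integral_add_measure i1 i2, integral_add_measure i3 i4,
    (me_left 1).integral_map, (me_left (-1)).integral_map,
    (me_right 1).integral_map, (me_right (-1)).integral_map]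

lemma nu_integral_eq (g : ℝ → ℝ) : (∫ t, g t ∂nu) = ∫ t in (-1:ℝ)..1, g t := by
  rw [show (∫ t, g t ∂nu) = ∫ t in Set.Icc (-1:ℝ) 1, g t from rfl,
    integral_Icc_eq_integral_Ioc, intervalIntegral.integral_of_le (by norm_num : (-1:ℝ) ≤ 1)]

noncomputable def Jf (a b s : ℝ) : ℝ := ∫ t in (-1:ℝ)..1, (a + b*t^2) ^ (-(s+1))

lemma edge_integral (a b : ℝ) (ha : 0 < a) (hb : 0 < b) (s : ℝ) :
    (∫ t in (-1:ℝ)..1, ((a+b)*(a + b*t^2) - 2*(s+1)*(a^2 + b^2*t^2)) / (a + b*t^2)^(s+2))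
      = 2*(b-a)*(a+b)^(-(s+1)) - 2*s*a * Jf a b s := by
  have hQ : ∀ t : ℝ, 0 < a + b*t^2 := fun t => by positivity
  have hQc : Continuous fun t : ℝ => a + b*t^2 :=
    continuous_const.add (continuous_const.mul (continuous_pow 2))
  have hder : ∀ t : ℝ, HasDerivAt (fun t => t * (a + b*t^2) ^ (-(s+1)))
      ((a - (2*s+1)*b*t^2) * (a + b*t^2) ^ (-(s+2))) t := by
    intro t
    have hQ' : HasDerivAt (fun t : ℝ => a + b*t^2) (2*b*t) t := by
      simpa [mul_comm, mul_assoc, mul_left_comm] using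
        (((hasDerivAt_pow 2 t).const_mul b).const_add a)
    have hr := hQ'.rpow_const (p := -(s+1)) (Or.inl (hQ t).ne')
    have h := (hasDerivAt_id t).mul hr
    refine h.congr_deriv ?_
    have e1 : (-(s+1) - 1 : ℝ) = -(s+2) := by ring
    rw [e1]
    have e2 : (a + b*t^2) ^ (-(s+1)) = (a + b*t^2) * (a + b*t^2) ^ (-(s+2)) := by
      rw [show (-(s+1) : ℝ) = 1 + -(s+2) by ring, Real.rpow_add (hQ t), Real.rpow_one]
    rw [e2]; simp only [id_eq]; ring
  have hkey : ∀ t : ℝ, ((a+b)*(a + b*t^2) - 2*(s+1)*(a^2 + b^2*t^2)) / (a + b*t^2)^(s+2)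
      = (b-a) * ((a - (2*s+1)*b*t^2) * (a + b*t^2) ^ (-(s+2)))
        + (-2*s*a) * (a + b*t^2) ^ (-(s+1)) := by
    intro t
    have e2 : (a + b*t^2) ^ (-(s+1)) = (a + b*t^2) * (a + b*t^2) ^ (-(s+2)) := by
      rw [show (-(s+1) : ℝ) = 1 + -(s+2) by ring, Real.rpow_add (hQ t), Real.rpow_one]
    rw [e2, Real.rpow_neg (hQ t).le, div_eq_mul_inv]
    ring
  have hc1 : Continuous fun t : ℝ => (a - (2*s+1)*b*t^2) * (a + b*t^2) ^ (-(s+2)) := by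
    exact ((continuous_const.sub (continuous_const.mul (continuous_pow 2))
      : Continuous fun t : ℝ => a - (2*s+1)*b*t^2)).mul
      (hQc.rpow_const fun t => Or.inl (hQ t).ne')
  have hc2 : Continuous fun t : ℝ => (a + b*t^2) ^ (-(s+1)) :=
    hQc.rpow_const fun t => Or.inl (hQ t).ne'
  rw [show (fun t : ℝ => ((a+b)*(a + b*t^2) - 2*(s+1)*(a^2 + b^2*t^2)) / (a + b*t^2)^(s+2))
      = fun t => (b-a) * ((a - (2*s+1)*b*t^2) * (a + b*t^2) ^ (-(s+2)))
        + (-2*s*a) * (a + b*t^2) ^ (-(s+1)) from funext hkey]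
  rw [intervalIntegral.integral_add
      (f := fun t : ℝ => (b-a) * ((a - (2*s+1)*b*t^2) * (a + b*t^2) ^ (-(s+2))))
      (g := fun t : ℝ => (-2*s*a) * (a + b*t^2) ^ (-(s+1)))
      ((continuous_const.mul hc1).intervalIntegrable _ _)
      ((continuous_const.mul hc2).intervalIntegrable _ _),
    intervalIntegral.integral_const_mul, intervalIntegral.integral_const_mul]
  have hftc : (∫ t in (-1:ℝ)..1, (a - (2*s+1)*b*t^2) * (a + b*t^2) ^ (-(s+2)))
      = 2 * (a+b)^(-(s+1)) := by
    rw [intervalIntegral.integral_eq_sub_of_hasDerivAt (fun t _ => hder t)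
      (hc1.intervalIntegrable _ _)]
    norm_num
    ring
  rw [hftc]
  show (b-a) * (2*(a+b)^(-(s+1))) + (-2*s*a) * Jf a b s = _
  ring

lemma Jf_cont (a b : ℝ) (ha : 0 < a) (hb : 0 < b) :
    ContinuousAt (fun s => Jf a b s) 0 := by
  have hQ : ∀ t : ℝ, 0 < a + b*t^2 := fun t => by positivity
  have heq : (fun s => Jf a b s)
      = fun s => ∫ t in Set.Ioc (-1:ℝ) 1, (a + b*t^2) ^ (-(s+1)) := by
    funext s
    rw [Jf, intervalIntegral.integral_of_le (by norm_num : (-1:ℝ) ≤ 1)]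
  rw [heq]
  apply continuousAt_of_dominated (bound := fun _ => max (a ^ (-2:ℝ)) 1)
  · filter_upwards with s
    exact ((continuous_const.add (continuous_const.mul (continuous_pow 2))).rpow_const
      (fun t => Or.inl (hQ t).ne')).aestronglyMeasurable
  · filter_upwards [Icc_mem_nhds (by norm_num : (-1:ℝ) < 0) (by norm_num : (0:ℝ) < 1)] with s hs
    filter_upwards with t
    have hs1 : -1 ≤ s := hs.1
    have hs2 : s ≤ 1 := hs.2
    have h0 : (0:ℝ) ≤ (a + b*t^2) ^ (-(s+1)) := Real.rpow_nonneg (hQ t).le _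
    rw [Real.norm_eq_abs, abs_of_nonneg h0]
    have h1 : (a + b*t^2) ^ (-(s+1)) ≤ a ^ (-(s+1)) :=
      Real.rpow_le_rpow_of_nonpos ha (le_add_of_nonneg_right (by positivity)) (by linarith)
    refine h1.trans ?_
    rcases le_total a 1 with h | h
    · exact le_max_of_le_left (Real.rpow_le_rpow_of_exponent_ge ha h (by linarith))
    · refine le_max_of_le_right ?_
      calc a ^ (-(s+1)) ≤ a ^ (0:ℝ) := Real.rpow_le_rpow_of_exponent_le h (by linarith)
        _ = 1 := Real.rpow_zero a
  · exact integrableOn_const measure_Ioc_lt_top.ne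
  · filter_upwards with t
    exact (continuousAt_const.rpow ((continuousAt_id.add continuousAt_const).neg)
      (Or.inl (hQ t).ne'))

lemma Jf_zero (a b : ℝ) (ha : 0 < a) (hb : 0 < b) :
    a * Jf a b 0 = 2 * Real.sqrt (a/b) * Real.arctan (Real.sqrt (b/a)) := by
  have hba : 0 < b / a := div_pos hb ha
  set c := Real.sqrt (b/a) with hc
  have hcpos : 0 < c := Real.sqrt_pos.2 hba
  have hc2 : c^2 = b/a := Real.sq_sqrt hba.le
  have key : ∀ t : ℝ, (a + b*t^2) ^ (-(0+1):ℝ) = a⁻¹ * (1 + (c*t)^2)⁻¹ := by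
    intro t
    have hQ : (0:ℝ) < a + b*t^2 := by positivity
    rw [show (-(0+1):ℝ) = -1 by norm_num, Real.rpow_neg_one, mul_pow, hc2]
    rw [show 1 + b/a*t^2 = (a + b*t^2)/a by field_simp]
    rw [inv_div]
    field_simp
  rw [Jf]
  simp only [key]
  rw [intervalIntegral.integral_const_mul,
    show (fun t : ℝ => (1 + (c*t)^2)⁻¹) = fun t => (fun u : ℝ => (1 + u^2)⁻¹) (c*t) from rfl,
    intervalIntegral.integral_comp_mul_left (fun u : ℝ => (1 + u^2)⁻¹) hcpos.ne']
  simp only [mul_neg_one, mul_one, smul_eq_mul]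
  have := integral_one_div_one_add_sq (a := -c) (b := c)
  simp only [one_div] at this
  rw [this, Real.arctan_neg]
  have hinv : c⁻¹ = Real.sqrt (a/b) := by
    rw [hc, ← Real.sqrt_inv, inv_div]
  rw [hinv]
  field_simp
  ring


set_option maxHeartbeats 1000000 in
lemma V_formula (a b : ℝ) (ha : 0 < a) (hb : 0 < b)
    (A : Matrix (Fin 2) (Fin 2) ℝ) (hA : A = !![a, 0; 0, b])
    (B : ℝ → Matrix (Fin 2) (Fin 2) ℝ)
    (hB : ∀ s : ℝ, B s = A.trace • A - (2 * (s + 1)) • (A * A)) (s : ℝ) :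
    (∫ x, (x ⬝ᵥ (B s).mulVec x) / (x ⬝ᵥ A.mulVec x) ^ (s + 2) ∂(cubeSurface 2))
      = -4*s*(a * Jf a b s + b * Jf b a s) := by
  have hF : (fun x : Fin 2 → ℝ =>
        (x ⬝ᵥ (B s).mulVec x) / (x ⬝ᵥ A.mulVec x) ^ (s + 2))
      = fun x => ((a+b)*(a*(x 0)^2 + b*(x 1)^2) - 2*(s+1)*(a^2*(x 0)^2 + b^2*(x 1)^2))
          / (a*(x 0)^2 + b*(x 1)^2) ^ (s+2) := by
    funext x
    rw [hB, hA]
    simp [dotProduct, Matrix.mulVec, Fin.sum_univ_two, Matrix.trace, Matrix.diag,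
      Matrix.mul_apply, Matrix.smul_apply, Matrix.sub_apply]
    congr 1
    · ring
    · congr 1
      ring
  have hcont : ∀ u v w : ℝ, 0 < u → 0 < v →
      Continuous fun t : ℝ => ((u+v)*(u + v*t^2) - 2*(w+1)*(u^2 + v^2*t^2)) / (u + v*t^2)^(w+2) := by
    intro u v w hu hv
    have hQ : ∀ t : ℝ, 0 < u + v*t^2 := fun t => by positivity
    exact ((continuous_const.mul (continuous_const.add (continuous_const.mul
        (continuous_pow 2)))).sub (continuous_const.mul (continuous_const.add
        (continuous_const.mul (continuous_pow 2))))).div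
      ((continuous_const.add (continuous_const.mul (continuous_pow 2))).rpow_const
        fun t => Or.inl (hQ t).ne')
      (fun t => (Real.rpow_pos_of_pos (hQ t) _).ne')
  set G : (Fin 2 → ℝ) → ℝ := fun x =>
    ((a+b)*(a*(x 0)^2 + b*(x 1)^2) - 2*(s+1)*(a^2*(x 0)^2 + b^2*(x 1)^2))
      / (a*(x 0)^2 + b*(x 1)^2) ^ (s+2) with hG
  have e1 : (fun t : ℝ => G ![1, t])
      = fun t => ((a+b)*(a + b*t^2) - 2*(s+1)*(a^2 + b^2*t^2)) / (a + b*t^2)^(s+2) := by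
    funext t
    simp only [hG, Matrix.cons_val_zero, Matrix.cons_val_one, Matrix.head_cons, one_pow, mul_one]
  have e2 : (fun t : ℝ => G ![-1, t])
      = fun t => ((a+b)*(a + b*t^2) - 2*(s+1)*(a^2 + b^2*t^2)) / (a + b*t^2)^(s+2) := by
    funext t
    simp only [hG, Matrix.cons_val_zero, Matrix.cons_val_one, Matrix.head_cons, neg_one_sq,
      mul_one]
  have e3 : (fun t : ℝ => G ![t, 1])
      = fun t => ((b+a)*(b + a*t^2) - 2*(s+1)*(b^2 + a^2*t^2)) / (b + a*t^2)^(s+2) := by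
    funext t
    simp only [hG, Matrix.cons_val_zero, Matrix.cons_val_one, Matrix.head_cons, one_pow, mul_one]
    congr 1
    · ring
    · congr 1
      ring
  have e4 : (fun t : ℝ => G ![t, -1])
      = fun t => ((b+a)*(b + a*t^2) - 2*(s+1)*(b^2 + a^2*t^2)) / (b + a*t^2)^(s+2) := by
    funext t
    simp only [hG, Matrix.cons_val_zero, Matrix.cons_val_one, Matrix.head_cons, neg_one_sq,
      mul_one]
    congr 1
    · ring
    · congr 1
      ring
  have i1 : Integrable (fun t : ℝ => G ![1, t]) nu := by
    rw [e1]; exact (hcont a b s ha hb).integrableOn_Icc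
  have i2 : Integrable (fun t : ℝ => G ![-1, t]) nu := by
    rw [e2]; exact (hcont a b s ha hb).integrableOn_Icc
  have i3 : Integrable (fun t : ℝ => G ![t, 1]) nu := by
    rw [e3]; exact (hcont b a s hb ha).integrableOn_Icc
  have i4 : Integrable (fun t : ℝ => G ![t, -1]) nu := by
    rw [e4]; exact (hcont b a s hb ha).integrableOn_Icc
  rw [hF]
  rw [integral_cubeSurface_two G i1 i2 i3 i4]
  rw [nu_integral_eq (fun t => G ![1, t]), nu_integral_eq (fun t => G ![-1, t]),
    nu_integral_eq (fun t => G ![t, 1]), nu_integral_eq (fun t => G ![t, -1])]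
  rw [e1, e2, e3, e4]
  rw [edge_integral a b ha hb s, edge_integral b a hb ha s,
    show b + a = a + b from add_comm b a]
  ring

end Stmt15Aux

open Stmt15Aux in
/-- For `Q(x) = a x₁² + b x₂²` with `a, b > 0`, `A = diag(a,b)`,
`B(s) = tr(A)A − 2(s+1)A²` and `V_Q(s) = ∫_{‖x‖_∞=1} Q_{B(s)}(x)/Q_A(x)^{s+2} dλ₁`,
one has `V_Q'(0) = −8[√(b/a)·arctan √(a/b) + √(a/b)·arctan √(b/a)]`. -/
theorem stmt15 (a b : ℝ) (ha : 0 < a) (hb : 0 < b)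
    (A : Matrix (Fin 2) (Fin 2) ℝ) (hA : A = !![a, 0; 0, b])
    (B : ℝ → Matrix (Fin 2) (Fin 2) ℝ)
    (hB : ∀ s : ℝ, B s = A.trace • A - (2 * (s + 1)) • (A * A))
    (V : ℝ → ℝ)
    (hV : ∀ s : ℝ, V s =
      ∫ x, (x ⬝ᵥ (B s).mulVec x) / (x ⬝ᵥ A.mulVec x) ^ (s + 2) ∂(cubeSurface 2)) :
    deriv V 0
      = -8 * (Real.sqrt (b / a) * Real.arctan (Real.sqrt (a / b))
          + Real.sqrt (a / b) * Real.arctan (Real.sqrt (b / a))) := by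
  have hVf : ∀ s : ℝ, V s = -4*s*(a * Jf a b s + b * Jf b a s) := by
    intro s
    rw [hV s, V_formula a b ha hb A hA B hB s]
  have h0 : V 0 = 0 := by rw [hVf 0]; ring
  have hcJ : ContinuousAt (fun s => -4*(a * Jf a b s + b * Jf b a s)) 0 :=
    continuousAt_const.mul ((continuousAt_const.mul (Jf_cont a b ha hb)).add
      (continuousAt_const.mul (Jf_cont b a hb ha)))
  have hderiv : HasDerivAt V (-4*(a * Jf a b 0 + b * Jf b a 0)) 0 := by
    rw [hasDerivAt_iff_tendsto_slope]
    have heq : (fun s => -4*(a * Jf a b s + b * Jf b a s))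
        =ᶠ[nhdsWithin (0:ℝ) {(0:ℝ)}ᶜ] slope V 0 := by
      filter_upwards [self_mem_nhdsWithin] with s hs
      have hs' : (s : ℝ) ≠ 0 := hs
      rw [slope_def_field, hVf s, h0]
      field_simp
      ring
    exact Filter.Tendsto.congr' heq (hcJ.tendsto.mono_left nhdsWithin_le_nhds)
  rw [hderiv.deriv, Jf_zero a b ha hb, Jf_zero b a hb ha]
  ring
end
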